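/- With δ₁ = 1/64 and δ₂ = 5/16, the 3×3 surface tension matrix σ with σ_{1,2} = 1/2 and σ_{1,3} = σ_{2,3} = 20δ₁ + δ₂/2 = 15/32 satisfies the triangle inequality and is conditionally negative semi-definite, the reciprocal mobility matrix 1/μ with (1/μ)_{1,2} = 2 and (1/μ)_{1,3} = (1/μ)_{2,3} = 2δ₂ = 5/8 is conditionally negative semi-definite but violates the triangle inequality, and nevertheless 16δ₁ + 2δ₂ = 7/8 < 1 = 2σ_{1,2}. -/

import Mathlib

open Matrix

/-- with δ₁ = 1/64, δ₂ = 5/16: the surface tension matrix σ (σ_{1,2} = 1/2,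
    σ_{1,3} = σ_{2,3} = 20δ₁ + δ₂/2 = 15/32) satisfies the triangle inequality and is
    conditionally negative semi-definite; the reciprocal mobility matrix ((1/μ)_{1,2} = 2,
    (1/μ)_{1,3} = (1/μ)_{2,3} = 2δ₂ = 5/8) is conditionally negative semi-definite but
    violates the triangle inequality; and 16δ₁ + 2δ₂ = 7/8 < 1 = 2σ_{1,2}. -/
theorem stmt_16 (δ1 δ2 : ℝ) (hδ1 : δ1 = 1 / 64) (hδ2 : δ2 = 5 / 16)
    (σ invμ : Matrix (Fin 3) (Fin 3) ℝ)
    (hσ : σ = !![0, 1/2, 20 * δ1 + δ2 / 2; 1/2, 0, 20 * δ1 + δ2 / 2;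
                 20 * δ1 + δ2 / 2, 20 * δ1 + δ2 / 2, 0])
    (hμ : invμ = !![0, 2, 2 * δ2; 2, 0, 2 * δ2; 2 * δ2, 2 * δ2, 0]) :
    (20 * δ1 + δ2 / 2 = 15 / 32) ∧
    (∀ i j k : Fin 3, i ≠ j → i ≠ k → j ≠ k → σ i j ≤ σ i k + σ k j) ∧
    (∀ v : Fin 3 → ℝ, v 0 + v 1 + v 2 = 0 → v ⬝ᵥ σ.mulVec v ≤ 0) ∧
    (∀ v : Fin 3 → ℝ, v 0 + v 1 + v 2 = 0 → v ⬝ᵥ invμ.mulVec v ≤ 0) ∧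
    (∃ i j k : Fin 3, i ≠ j ∧ i ≠ k ∧ j ≠ k ∧ invμ i k + invμ k j < invμ i j) ∧
    (16 * δ1 + 2 * δ2 = 7 / 8 ∧ 16 * δ1 + 2 * δ2 < 2 * σ 0 1 ∧ 2 * σ 0 1 = 1) := by
  subst hδ1 hδ2 hσ hμ
  refine ⟨by norm_num, ?_, ?_, ?_, ⟨0, 1, 2, by decide, by decide, by decide, by norm_num [Matrix.cons_val_zero, Matrix.cons_val_one, Matrix.cons_val_two, Matrix.tail_cons, Matrix.head_cons]⟩, by norm_num [Matrix.cons_val_zero, Matrix.cons_val_one]⟩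
  · intro i j k hij hik hjk
    fin_cases i <;> fin_cases j <;> fin_cases k <;> simp_all <;> norm_num
  · intro v hv
    have h2 : v 2 = -(v 0 + v 1) := by linarith
    simp [Matrix.mulVec, dotProduct, Fin.sum_univ_three, h2]
    nlinarith [sq_nonneg (v 0 + v 1), sq_nonneg (v 0 - v 1), sq_nonneg (v 0), sq_nonneg (v 1)]
  · intro v hv
    have h2 : v 2 = -(v 0 + v 1) := by linarith
    simp [Matrix.mulVec, dotProduct, Fin.sum_univ_three, h2]
    nlinarith [sq_nonneg (v 0 + v 1), sq_nonneg (v 0 - v 1)]
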